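/- arXiv:1405.1059 — 3 statements merged into one kernel-verified Lean document; each statement's English description precedes it below -/
import Mathlib

section
/- Let K be a field of characteristic not 2 or 3 and E : y² = x³ + Ax + B a smooth elliptic curve over K. Define the third Semaev polynomial f_3(z_1,z_2,z_3) = (z_1 - z_2)²z_3² - 2((z_1+z_2)(z_1z_2 + A) + 2B)z_3 + (z_1z_2 - A)² - 4B(z_1+z_2). If P_1 = (Z_1, Y_1), P_2 = (Z_2, Y_2), P_3 = (Z_3, Y_3) are affine points on E over the algebraic closure with P_1 + P_2 + P_3 = O, then f_3(Z_1, Z_2, Z_3) = 0. -/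
/-- The third Semaev (summation) polynomial of `E : y² = x³ + Ax + B`. -/
def semaev3 {R : Type*} [CommRing R] (A B z₁ z₂ z₃ : R) : R :=
  (z₁ - z₂) ^ 2 * z₃ ^ 2 - 2 * ((z₁ + z₂) * (z₁ * z₂ + A) + 2 * B) * z₃ +
    (z₁ * z₂ - A) ^ 2 - 4 * B * (z₁ + z₂)

open Classical in
/-- If three affine points `(Z_i, Y_i)` of `E : y² = x³ + Ax + B` over the algebraic
closure sum to the point at infinity, then the third Semaev polynomial vanishes at
`(Z₁, Z₂, Z₃)`. -/
theorem semaev3_vanishes_of_sum_eq_zero {F : Type*} [Field F]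
    (h2 : ringChar F ≠ 2) (h3 : ringChar F ≠ 3) (A B : F)
    (W : WeierstrassCurve.Affine (AlgebraicClosure F))
    (hW : W = { a₁ := 0, a₂ := 0, a₃ := 0,
                a₄ := algebraMap F (AlgebraicClosure F) A,
                a₆ := algebraMap F (AlgebraicClosure F) B })
    (hΔ : W.Δ ≠ 0)
    (Z₁ Z₂ Z₃ Y₁ Y₂ Y₃ : AlgebraicClosure F)
    (h1 : W.Nonsingular Z₁ Y₁) (hp2 : W.Nonsingular Z₂ Y₂) (hp3 : W.Nonsingular Z₃ Y₃)
    (hsum : WeierstrassCurve.Affine.Point.some _ _ h1 + WeierstrassCurve.Affine.Point.some _ _ hp2 +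
      WeierstrassCurve.Affine.Point.some _ _ hp3 = 0) :
    semaev3 (algebraMap F (AlgebraicClosure F) A) (algebraMap F (AlgebraicClosure F) B)
      Z₁ Z₂ Z₃ = 0 := by
  set A' := algebraMap F (AlgebraicClosure F) A with hA'
  set B' := algebraMap F (AlgebraicClosure F) B with hB'
  have e₁ : Y₁ ^ 2 = Z₁ ^ 3 + A' * Z₁ + B' := by
    have := (WeierstrassCurve.Affine.equation_iff ..).mp h1.1
    rw [hW] at this; simpa using this
  have e₂ : Y₂ ^ 2 = Z₂ ^ 3 + A' * Z₂ + B' := by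
    have := (WeierstrassCurve.Affine.equation_iff ..).mp hp2.1
    rw [hW] at this; simpa using this
  have hneg : W.negY Z₂ Y₂ = -Y₂ := by
    rw [hW]; simp [WeierstrassCurve.Affine.negY]
  by_cases hY : Z₁ = Z₂ ∧ Y₁ = W.negY Z₂ Y₂
  · rw [WeierstrassCurve.Affine.Point.add_of_Y_eq hY.1 hY.2, zero_add] at hsum
    exact absurd hsum (WeierstrassCurve.Affine.Point.some_ne_zero hp3)
  · have hxy : Z₁ = Z₂ → Y₁ ≠ W.negY Z₂ Y₂ := fun hx hy => hY ⟨hx, hy⟩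
    rw [WeierstrassCurve.Affine.Point.add_some hY] at hsum
    have h' : WeierstrassCurve.Affine.Point.some _ _
        (WeierstrassCurve.Affine.nonsingular_add h1 hp2 hY) =
        -WeierstrassCurve.Affine.Point.some _ _ hp3 := by
      rw [eq_neg_iff_add_eq_zero]; exact hsum
    rw [WeierstrassCurve.Affine.Point.neg_some] at h'
    injection h' with hx hy
    -- hx : W.addX Z₁ Z₂ (W.slope Z₁ Z₂ Y₁ Y₂) = Z₃
    by_cases hzz : Z₁ = Z₂
    · -- doubling case
      subst hzz
      have hYne : Y₁ ≠ -Y₂ := by rw [← hneg]; exact hxy rfl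
      have hY12 : Y₁ = Y₂ := by
        have hsq : Y₁ ^ 2 = Y₂ ^ 2 := by rw [e₁, e₂]
        rcases (sq_eq_sq_iff_eq_or_eq_neg).mp hsq with h | h
        · exact h
        · exact absurd h hYne
      have h2Y : (2 : AlgebraicClosure F) * Y₁ ≠ 0 := fun h =>
        hYne (by rw [← hY12]; linear_combination h)
      have hL : W.slope Z₁ Z₁ Y₁ Y₂ = (3 * Z₁ ^ 2 + A') / (2 * Y₁) := by
        rw [WeierstrassCurve.Affine.slope_of_Y_ne rfl (hxy rfl), hW]
        simp
        rw [two_mul]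
      rw [hL, hW] at hx
      simp only [WeierstrassCurve.Affine.addX] at hx
      have hx' : Z₃ * (2 * Y₁) ^ 2 =
          (3 * Z₁ ^ 2 + A') ^ 2 - 2 * Z₁ * (2 * Y₁) ^ 2 := by
        have hY0 : Y₁ ≠ 0 := right_ne_zero_of_mul h2Y
        have h20 : (2 : AlgebraicClosure F) ≠ 0 := left_ne_zero_of_mul h2Y
        rw [← hx]; field_simp; ring
      simp only [semaev3]
      linear_combination (-1 : AlgebraicClosure F) * hx' + (4 * Z₃ + 8 * Z₁) * e₁
    · -- chord case
      have hL : W.slope Z₁ Z₂ Y₁ Y₂ = (Y₁ - Y₂) / (Z₁ - Z₂) :=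
        WeierstrassCurve.Affine.slope_of_X_ne hzz
      have hd : Z₁ - Z₂ ≠ 0 := sub_ne_zero.mpr hzz
      rw [hL, hW] at hx
      simp only [WeierstrassCurve.Affine.addX] at hx
      have hx' : Z₃ * (Z₁ - Z₂) ^ 2 =
          (Y₁ - Y₂) ^ 2 - (Z₁ + Z₂) * (Z₁ - Z₂) ^ 2 := by
        field_simp at hx
        linear_combination -hx
      have key : (Z₁ - Z₂) ^ 2 * semaev3 A' B' Z₁ Z₂ Z₃ = 0 := by
        simp only [semaev3]
        linear_combination
          ((Z₁ - Z₂) ^ 2 * Z₃ + (Y₁ - Y₂) ^ 2 - (Z₁ + Z₂) * (Z₁ - Z₂) ^ 2 -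
              2 * ((Z₁ + Z₂) * (Z₁ * Z₂ + A') + 2 * B')) * hx' +
          (Y₁ ^ 2 + Y₂ ^ 2 - (Z₁ + Z₂) * (Z₁ - Z₂) ^ 2 -
              ((Z₁ + Z₂) * (Z₁ * Z₂ + A') + 2 * B') - 4 * Y₁ * Y₂ + 4 * Y₂ ^ 2) * e₁ +
          (Y₁ ^ 2 + Y₂ ^ 2 - (Z₁ + Z₂) * (Z₁ - Z₂) ^ 2 -
              ((Z₁ + Z₂) * (Z₁ * Z₂ + A') + 2 * B') - 4 * Y₁ * Y₂ +
              4 * (Z₁ ^ 3 + A' * Z₁ + B')) * e₂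
      have := mul_eq_zero.mp key
      rcases this with h | h
      · exact absurd h (pow_ne_zero 2 hd)
      · exact h
end

section
/- Let K be a field of characteristic not 2 or 3 and E : y² = x³ + Ax + B a smooth elliptic curve over K with algebraic closure K̄. If Z_1, Z_2, Z_3 ∈ K̄ satisfy f_3(Z_1, Z_2, Z_3) = 0 and each Z_i is the x-coordinate of some point of E(K̄), then there exist Y_1, Y_2, Y_3 ∈ K̄ with (Z_i, Y_i) ∈ E(K̄) and (Z_1,Y_1) + (Z_2,Y_2) + (Z_3,Y_3) = O. -/
open Classical WeierstrassCurve.Affine WeierstrassCurve.Affine.Point in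
/-- If the chord/tangent x-coordinate of `P₁ + P₂` equals `Z₃`, then there is a third point
with x-coordinate `Z₃` making the three points sum to zero. -/
lemma semaev_final_step {K : Type*} [Field K] {W : WeierstrassCurve.Affine K}
    {Z₁ Z₂ Z₃ Y₁ Y₂ : K} (h1 : W.Nonsingular Z₁ Y₁) (h2 : W.Nonsingular Z₂ Y₂)
    (hxy : Z₁ = Z₂ → Y₁ ≠ W.negY Z₂ Y₂)
    (hx : W.addX Z₁ Z₂ (W.slope Z₁ Z₂ Y₁ Y₂) = Z₃) :
    ∃ (Y₃ : K) (h3 : W.Nonsingular Z₃ Y₃), some _ _ h1 + some _ _ h2 + some _ _ h3 = 0 := by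
  subst hx
  refine ⟨W.negY _ (W.addY Z₁ Z₂ Y₁ (W.slope Z₁ Z₂ Y₁ Y₂)),
    (nonsingular_neg ..).mpr (nonsingular_add h1 h2 (fun h => hxy h.1 h.2)), ?_⟩
  rw [add_some (fun h => hxy h.1 h.2)]
  exact add_of_Y_eq rfl (W.negY_negY _ _).symm

open Classical WeierstrassCurve.Affine WeierstrassCurve.Affine.Point in
/-- Main algebraic content of the Semaev polynomial theorem, over any field with `2 ≠ 0`. -/
lemma semaev_main {K : Type*} [Field K] (h2K : (2 : K) ≠ 0) (a b : K)
    (W : WeierstrassCurve.Affine K) (hW : W = { a₁ := 0, a₂ := 0, a₃ := 0, a₄ := a, a₆ := b })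
    (Z₁ Z₂ Z₃ : K) (hf : semaev3 a b Z₁ Z₂ Z₃ = 0)
    (hx1 : ∃ y, W.Nonsingular Z₁ y) (hx2 : ∃ y, W.Nonsingular Z₂ y) :
    ∃ (Y₁ Y₂ Y₃ : K) (h1 : W.Nonsingular Z₁ Y₁) (hp2 : W.Nonsingular Z₂ Y₂)
      (hp3 : W.Nonsingular Z₃ Y₃), some _ _ h1 + some _ _ hp2 + some _ _ hp3 = 0 := by
  have ha₁ : W.a₁ = 0 := by rw [hW]
  have ha₂ : W.a₂ = 0 := by rw [hW]
  have ha₃ : W.a₃ = 0 := by rw [hW]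
  have ha₄ : W.a₄ = a := by rw [hW]
  have ha₆ : W.a₆ = b := by rw [hW]
  clear hW
  obtain ⟨y₁, h1⟩ := hx1
  obtain ⟨y₂, hh2⟩ := hx2
  have hneg : ∀ x y : K, W.negY x y = -y := by
    intro x y
    rw [negY, ha₁, ha₃]
    ring
  have e1 : y₁ ^ 2 = Z₁ ^ 3 + a * Z₁ + b := by
    have h := (W.equation_iff Z₁ y₁).mp h1.1
    rw [ha₁, ha₂, ha₃, ha₄, ha₆] at h
    linear_combination h
  have e2 : y₂ ^ 2 = Z₂ ^ 3 + a * Z₂ + b := by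
    have h := (W.equation_iff Z₂ y₂).mp hh2.1
    rw [ha₁, ha₂, ha₃, ha₄, ha₆] at h
    linear_combination h
  unfold semaev3 at hf
  by_cases hZ : Z₁ = Z₂
  · -- doubling case
    subst hZ
    have hy₁ : y₁ ≠ 0 := by
      intro hy0
      subst hy0
      have hg : Z₁ ^ 3 + a * Z₁ + b = 0 := by linear_combination -e1
      have hsq : (3 * Z₁ ^ 2 + a) ^ 2 = 0 := by
        linear_combination hf + (4 * Z₃ + 8 * Z₁) * hg
      have h3a : 3 * Z₁ ^ 2 + a = 0 :=
        pow_eq_zero_iff (n := 2) (by norm_num) |>.mp hsq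
      obtain ⟨-, hns⟩ := (W.nonsingular_iff Z₁ (0 : K)).mp h1
      rcases hns with h | h
      · apply h
        rw [ha₁, ha₂, ha₄]
        linear_combination -h3a
      · apply h
        rw [ha₁, ha₃]
        ring
    have hxy : Z₁ = Z₁ → y₁ ≠ W.negY Z₁ y₁ := by
      intro _ hcon
      rw [hneg] at hcon
      apply hy₁
      have h2y : 2 * y₁ = 0 := by linear_combination hcon
      exact (mul_eq_zero.mp h2y).resolve_left h2K
    have hslope : W.slope Z₁ Z₁ y₁ y₁ = (3 * Z₁ ^ 2 + a) / (2 * y₁) := by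
      rw [slope_of_Y_ne rfl (hxy rfl), hneg, ha₁, ha₂, ha₄]
      ring_nf
    have hX : W.addX Z₁ Z₁ (W.slope Z₁ Z₁ y₁ y₁) = Z₃ := by
      rw [hslope, addX, ha₁, ha₂]
      have hkey : (2 * y₁) ^ 2 * (Z₃ + 2 * Z₁) = (3 * Z₁ ^ 2 + a) ^ 2 := by
        linear_combination -hf + (4 * Z₃ + 8 * Z₁) * e1
      have h2y : (2 * y₁) ≠ 0 := mul_ne_zero h2K hy₁
      field_simp
      linear_combination -hkey
    obtain ⟨Y₃, hp3, hsum⟩ := semaev_final_step h1 h1 hxy hX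
    exact ⟨y₁, y₁, Y₃, h1, h1, hp3, hsum⟩
  · -- chord case: Z₁ ≠ Z₂
    have hd : Z₁ - Z₂ ≠ 0 := sub_ne_zero.mpr hZ
    have hprod : ((Z₁ - Z₂) ^ 2 * Z₃ - (y₁ - y₂) ^ 2 + (Z₁ + Z₂) * (Z₁ - Z₂) ^ 2) *
        ((Z₁ - Z₂) ^ 2 * Z₃ - (y₁ + y₂) ^ 2 + (Z₁ + Z₂) * (Z₁ - Z₂) ^ 2) = 0 := by
      linear_combination (Z₁ - Z₂) ^ 2 * hf +
        (-(2 * ((Z₁ - Z₂) ^ 2 * (Z₃ + Z₁ + Z₂)) - y₁ ^ 2 - y₂ ^ 2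
          - (Z₁ ^ 3 + a * Z₁ + b) - (Z₂ ^ 3 + a * Z₂ + b) + 4 * y₂ ^ 2)) * e1 +
        (-(2 * ((Z₁ - Z₂) ^ 2 * (Z₃ + Z₁ + Z₂)) - y₁ ^ 2 - y₂ ^ 2
          - (Z₁ ^ 3 + a * Z₁ + b) - (Z₂ ^ 3 + a * Z₂ + b) + 4 * (Z₁ ^ 3 + a * Z₁ + b))) * e2
    rcases mul_eq_zero.mp hprod with hc | hc
    · -- use Y₂ = y₂
      have hX : W.addX Z₁ Z₂ (W.slope Z₁ Z₂ y₁ y₂) = Z₃ := by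
        rw [slope_of_X_ne hZ, addX, ha₁, ha₂]
        field_simp
        linear_combination -hc
      obtain ⟨Y₃, hp3, hsum⟩ := semaev_final_step h1 hh2 (fun h => absurd h hZ) hX
      exact ⟨y₁, y₂, Y₃, h1, hh2, hp3, hsum⟩
    · -- use Y₂ = -y₂
      have hh2' : W.Nonsingular Z₂ (-y₂) := by
        have h := (nonsingular_neg _ _).mpr hh2
        rwa [hneg] at h
      have hX : W.addX Z₁ Z₂ (W.slope Z₁ Z₂ y₁ (-y₂)) = Z₃ := by
        rw [slope_of_X_ne hZ, addX, ha₁, ha₂]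
        field_simp
        linear_combination -hc
      obtain ⟨Y₃, hp3, hsum⟩ := semaev_final_step h1 hh2' (fun h => absurd h hZ) hX
      exact ⟨y₁, -y₂, Y₃, h1, hh2', hp3, hsum⟩

open Classical in
/-- If `Z₁, Z₂, Z₃` in the algebraic closure satisfy `f₃(Z₁,Z₂,Z₃) = 0` and each `Z_i` is
the x-coordinate of some point of `E(K̄)`, then there exist `Y₁, Y₂, Y₃` with
`(Z_i, Y_i) ∈ E(K̄)` and `(Z₁,Y₁) + (Z₂,Y₂) + (Z₃,Y₃) = O`. -/
theorem sum_eq_zero_of_semaev3_vanishes {F : Type*} [Field F]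
    (h2 : ringChar F ≠ 2) (h3 : ringChar F ≠ 3) (A B : F)
    (W : WeierstrassCurve.Affine (AlgebraicClosure F))
    (hW : W = { a₁ := 0, a₂ := 0, a₃ := 0,
                a₄ := algebraMap F (AlgebraicClosure F) A,
                a₆ := algebraMap F (AlgebraicClosure F) B })
    (hΔ : W.Δ ≠ 0)
    (Z₁ Z₂ Z₃ : AlgebraicClosure F)
    (hf : semaev3 (algebraMap F (AlgebraicClosure F) A) (algebraMap F (AlgebraicClosure F) B)
      Z₁ Z₂ Z₃ = 0)
    (hx1 : ∃ y, W.Nonsingular Z₁ y) (hx2 : ∃ y, W.Nonsingular Z₂ y)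
    (hx3 : ∃ y, W.Nonsingular Z₃ y) :
    ∃ (Y₁ Y₂ Y₃ : AlgebraicClosure F) (h1 : W.Nonsingular Z₁ Y₁) (hp2 : W.Nonsingular Z₂ Y₂)
      (hp3 : W.Nonsingular Z₃ Y₃),
      WeierstrassCurve.Affine.Point.some _ _ h1 + WeierstrassCurve.Affine.Point.some _ _ hp2 +
        WeierstrassCurve.Affine.Point.some _ _ hp3 = 0 := by
  have h2F : (2 : F) ≠ 0 := by
    intro h20
    have hdvd : ringChar F ∣ 2 := ringChar.dvd (by exact_mod_cast h20)
    rcases (Nat.dvd_prime Nat.prime_two).mp hdvd with h | h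
    · exact CharP.ringChar_ne_one h
    · exact h2 h
  have h2K : (2 : AlgebraicClosure F) ≠ 0 := by
    intro h20
    apply h2F
    apply (algebraMap F (AlgebraicClosure F)).injective
    rw [map_ofNat, map_zero]
    exact_mod_cast h20
  exact semaev_main h2K _ _ W hW Z₁ Z₂ Z₃ hf hx1 hx2
end

section
/- Let q ≡ 1 (mod 3), μ ∈ F_q a non-cube so that F_{q^3} = F_q[ζ]/(ζ³ - μ), char F_q ∉ {2,3}, and E : y² = x³ + Ax + B over F_q. Writing x = x_0 + x_1ζ + x_2ζ², the Weil restriction of f_3(x, x^q, x^{q²}) (reduced modulo x_i^q - x_i) is the single polynomial f̃_3(x_0,x_1,x_2) = -3x_0⁴ - 12μ²x_0x_2³ - 12μx_0x_1³ + 18μx_0²x_1x_2 + 9μ²x_1²x_2² - 6Ax_0² + 6Aμx_1x_2 - 12Bx_0 + A². That is, for all X_0, X_1, X_2 ∈ F_q, setting X = X_0 + X_1ζ + X_2ζ², one has f_3(X, X^q, X^{q²}) = f̃_3(X_0, X_1, X_2). -/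
/-- The Weil restriction `f̃₃` of `f₃(x, x^q, x^{q²})` with respect to the Kummer basis
`{1, ζ, ζ²}` of `F_{q³} = F_q[ζ]/(ζ³ - μ)`. -/
def ftilde3 {R : Type*} [CommRing R] (μ A B x₀ x₁ x₂ : R) : R :=
  -3 * x₀ ^ 4 - 12 * μ ^ 2 * x₀ * x₂ ^ 3 - 12 * μ * x₀ * x₁ ^ 3 +
    18 * μ * x₀ ^ 2 * x₁ * x₂ + 9 * μ ^ 2 * x₁ ^ 2 * x₂ ^ 2 - 6 * A * x₀ ^ 2 +
    6 * A * μ * x₁ * x₂ - 12 * B * x₀ + A ^ 2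

/-- If `a ≠ 0` in a finite field with `card - 1 = 3k` and `a ^ k = 1`, then `a` is a cube. -/
lemma exists_cube_of_pow_eq_one {F : Type*} [Field F] [Fintype F] {k : ℕ} (hk : 0 < k)
    (hcard : Fintype.card F - 1 = 3 * k) {a : F} (ha : a ≠ 0) (h : a ^ k = 1) :
    ∃ c : F, c ^ 3 = a := by
  classical
  obtain ⟨g, hg⟩ := IsCyclic.exists_generator (α := Fˣ)
  set u := Units.mk0 a ha with hu_def
  obtain ⟨n, hn⟩ : u ∈ Submonoid.powers g := by
    rw [mem_powers_iff_mem_zpowers]; exact hg u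
  have hn' : g ^ n = u := hn
  have hu : u ^ k = 1 := by
    ext; push_cast [hu_def]; exact h
  have horder : orderOf g = 3 * k := by
    rw [orderOf_eq_card_of_forall_mem_zpowers hg, Nat.card_eq_fintype_card, Fintype.card_units, hcard]
  have hdvd : orderOf g ∣ n * k := by
    apply orderOf_dvd_of_pow_eq_one
    rw [pow_mul, hn', hu]
  rw [horder] at hdvd
  obtain ⟨m, hm⟩ := hdvd
  have hn3 : n = 3 * m := by
    have : n * k = (3 * m) * k := by rw [hm]; ring
    exact Nat.eq_of_mul_eq_mul_right hk this
  refine ⟨((g : Fˣ) : F) ^ m, ?_⟩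
  have : (g ^ m) ^ 3 = u := by
    rw [← pow_mul, mul_comm, ← hn3, hn']
  calc (((g : Fˣ) : F) ^ m) ^ 3 = (((g ^ m) ^ 3 : Fˣ) : F) := by push_cast; ring
    _ = a := by rw [this]; rfl

set_option maxHeartbeats 1000000 in
/-- Weil restriction identity for the third Semaev polynomial. -/
theorem weil_restriction_semaev3 {F : Type*} [Field F] [Fintype F]
    (hq3 : Fintype.card F % 3 = 1) (h2 : ringChar F ≠ 2) (h3 : ringChar F ≠ 3)
    (μ A B : F) (hμ : ¬∃ c : F, c ^ 3 = μ) (X₀ X₁ X₂ : F) :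
    semaev3
      (algebraMap F (AdjoinRoot (Polynomial.X ^ 3 - Polynomial.C μ)) A)
      (algebraMap F (AdjoinRoot (Polynomial.X ^ 3 - Polynomial.C μ)) B)
      (algebraMap F (AdjoinRoot (Polynomial.X ^ 3 - Polynomial.C μ)) X₀ +
        algebraMap F (AdjoinRoot (Polynomial.X ^ 3 - Polynomial.C μ)) X₁ *
          AdjoinRoot.root (Polynomial.X ^ 3 - Polynomial.C μ) +
        algebraMap F (AdjoinRoot (Polynomial.X ^ 3 - Polynomial.C μ)) X₂ *
          AdjoinRoot.root (Polynomial.X ^ 3 - Polynomial.C μ) ^ 2)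
      ((algebraMap F (AdjoinRoot (Polynomial.X ^ 3 - Polynomial.C μ)) X₀ +
        algebraMap F (AdjoinRoot (Polynomial.X ^ 3 - Polynomial.C μ)) X₁ *
          AdjoinRoot.root (Polynomial.X ^ 3 - Polynomial.C μ) +
        algebraMap F (AdjoinRoot (Polynomial.X ^ 3 - Polynomial.C μ)) X₂ *
          AdjoinRoot.root (Polynomial.X ^ 3 - Polynomial.C μ) ^ 2) ^ Fintype.card F)
      ((algebraMap F (AdjoinRoot (Polynomial.X ^ 3 - Polynomial.C μ)) X₀ +
        algebraMap F (AdjoinRoot (Polynomial.X ^ 3 - Polynomial.C μ)) X₁ *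
          AdjoinRoot.root (Polynomial.X ^ 3 - Polynomial.C μ) +
        algebraMap F (AdjoinRoot (Polynomial.X ^ 3 - Polynomial.C μ)) X₂ *
          AdjoinRoot.root (Polynomial.X ^ 3 - Polynomial.C μ) ^ 2) ^ Fintype.card F ^ 2) =
    algebraMap F (AdjoinRoot (Polynomial.X ^ 3 - Polynomial.C μ))
      (ftilde3 μ A B X₀ X₁ X₂) := by
  classical
  have hcard : 1 < Fintype.card F := Fintype.one_lt_card
  have hdm := Nat.div_add_mod (Fintype.card F) 3
  obtain ⟨k, hQ, hkpos⟩ : ∃ k, Fintype.card F = 3 * k + 1 ∧ 0 < k :=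
    ⟨Fintype.card F / 3, by omega, by omega⟩
  have hμ0 : μ ≠ 0 := fun h => hμ ⟨0, by rw [h]; ring⟩
  have hω3 : (μ ^ k) ^ 3 = 1 := by
    rw [← pow_mul]
    have h31 : k * 3 = Fintype.card F - 1 := by omega
    rw [h31]
    exact FiniteField.pow_card_sub_one_eq_one μ hμ0
  have hωne : μ ^ k ≠ 1 := by
    intro h
    exact hμ (exists_cube_of_pow_eq_one hkpos (by omega) hμ0 h)
  have hw : (μ ^ k) ^ 2 + μ ^ k + 1 = 0 := by
    have hfac : (μ ^ k - 1) * ((μ ^ k) ^ 2 + μ ^ k + 1) = 0 := by linear_combination hω3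
    rcases mul_eq_zero.mp hfac with h | h
    · exact absurd (by linear_combination h) hωne
    · exact h
  have hirr : Irreducible (Polynomial.X ^ 3 - Polynomial.C μ) :=
    X_pow_sub_C_irreducible_of_prime (by norm_num) (fun b hb => hμ ⟨b, hb⟩)
  haveI := Fact.mk hirr
  haveI hFp : CharP F (ringChar F) := ringChar.charP F
  haveI hpP : Fact (ringChar F).Prime := ⟨CharP.char_is_prime F (ringChar F)⟩
  haveI hRp : CharP (AdjoinRoot (Polynomial.X ^ 3 - Polynomial.C μ)) (ringChar F) :=
    charP_of_injective_algebraMap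
      (algebraMap F (AdjoinRoot (Polynomial.X ^ 3 - Polynomial.C μ))).injective (ringChar F)
  obtain ⟨n, -, hn⟩ := FiniteField.card F (ringChar F)
  have hz3 : (AdjoinRoot.root (Polynomial.X ^ 3 - Polynomial.C μ)) ^ 3
      = algebraMap F (AdjoinRoot (Polynomial.X ^ 3 - Polynomial.C μ)) μ := by
    rw [root_X_pow_sub_C_pow, AdjoinRoot.algebraMap_eq]
  have hzq : (AdjoinRoot.root (Polynomial.X ^ 3 - Polynomial.C μ)) ^ Fintype.card F
      = algebraMap F (AdjoinRoot (Polynomial.X ^ 3 - Polynomial.C μ)) (μ ^ k) *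
        AdjoinRoot.root (Polynomial.X ^ 3 - Polynomial.C μ) := by
    rw [hQ, pow_succ (AdjoinRoot.root (Polynomial.X ^ 3 - Polynomial.C μ)) (3 * k),
      pow_mul (AdjoinRoot.root (Polynomial.X ^ 3 - Polynomial.C μ)) 3 k, hz3, map_pow]
  have key : ∀ a b c : F,
      (algebraMap F (AdjoinRoot (Polynomial.X ^ 3 - Polynomial.C μ)) a +
        algebraMap F (AdjoinRoot (Polynomial.X ^ 3 - Polynomial.C μ)) b *
          AdjoinRoot.root (Polynomial.X ^ 3 - Polynomial.C μ) +
        algebraMap F (AdjoinRoot (Polynomial.X ^ 3 - Polynomial.C μ)) c *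
          AdjoinRoot.root (Polynomial.X ^ 3 - Polynomial.C μ) ^ 2) ^ Fintype.card F
      = algebraMap F (AdjoinRoot (Polynomial.X ^ 3 - Polynomial.C μ)) a +
        algebraMap F (AdjoinRoot (Polynomial.X ^ 3 - Polynomial.C μ)) (μ ^ k * b) *
          AdjoinRoot.root (Polynomial.X ^ 3 - Polynomial.C μ) +
        algebraMap F (AdjoinRoot (Polynomial.X ^ 3 - Polynomial.C μ)) ((μ ^ k) ^ 2 * c) *
          AdjoinRoot.root (Polynomial.X ^ 3 - Polynomial.C μ) ^ 2 := by
    intro a b c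
    have h1 : ∀ x y : AdjoinRoot (Polynomial.X ^ 3 - Polynomial.C μ),
        (x + y) ^ Fintype.card F = x ^ Fintype.card F + y ^ Fintype.card F := by
      intro x y; rw [hn]; exact add_pow_char_pow x y (ringChar F) n
    rw [h1, h1, mul_pow, mul_pow, ← map_pow, ← map_pow, ← map_pow,
      FiniteField.pow_card, FiniteField.pow_card, FiniteField.pow_card,
      hzq, pow_right_comm _ 2 (Fintype.card F), hzq]
    simp only [map_mul, map_pow]
    ring
  have hq2 : ∀ x : AdjoinRoot (Polynomial.X ^ 3 - Polynomial.C μ),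
      x ^ Fintype.card F ^ 2 = (x ^ Fintype.card F) ^ Fintype.card F := by
    intro x; rw [← pow_mul, sq]
  rw [hq2, key X₀ X₁ X₂, key X₀ (μ ^ k * X₁) ((μ ^ k) ^ 2 * X₂)]
  have e1 : μ ^ k * (μ ^ k * X₁) = (μ ^ k) ^ 2 * X₁ := by ring
  have e2 : (μ ^ k) ^ 2 * ((μ ^ k) ^ 2 * X₂) = μ ^ k * X₂ := by
    linear_combination μ ^ k * X₂ * hω3
  rw [e1, e2]
  set R := AdjoinRoot (Polynomial.X ^ 3 - Polynomial.C μ) with hR_def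
  set φ := algebraMap F R with hφ_def
  set z := AdjoinRoot.root (Polynomial.X ^ 3 - Polynomial.C μ) with hz_def
  set ω := μ ^ k with hω_def
  have hz3' : z ^ 3 = φ μ := hz3
  have hwR : φ ω ^ 2 + φ ω + 1 = 0 := by
    have := congrArg φ hw
    simpa using this
  simp only [semaev3, ftilde3, map_mul, map_pow, map_add, map_sub, map_neg, map_ofNat,
    map_one]
  linear_combination ((-2)*(φ X₂)^2*(φ A)*(z)*(φ ω) + (-2)*(φ X₂)^2*(φ A)*(z)*(φ ω)^2 + (-2)*(φ X₂)^2*(φ A)*(z)*(φ ω)^3 + (1)*(φ X₂)^4*(z)^5*(φ ω)^2 + (-2)*(φ X₂)^4*(z)^5*(φ ω)^3 + (-1)*(φ X₂)^4*(z)^5*(φ ω)^4 + (-2)*(φ X₂)^4*(z)^5*(φ ω)^5 + (1)*(φ X₂)^4*(z)^5*(φ ω)^6 + (1)*(φ X₂)^4*(φ μ)*(z)^2*(φ ω)^2 + (-2)*(φ X₂)^4*(φ μ)*(z)^2*(φ ω)^3 + (-1)*(φ X₂)^4*(φ μ)*(z)^2*(φ ω)^4 + (-2)*(φ X₂)^4*(φ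 μ)*(z)^2*(φ ω)^5 + (1)*(φ X₂)^4*(φ μ)*(z)^2*(φ ω)^6 + (-4)*(φ X₁)*(φ X₂)*(φ A)*(φ ω) + (-6)*(φ X₁)*(φ X₂)*(φ A)*(φ ω)^2 + (-2)*(φ X₁)*(φ X₂)*(φ A)*(φ ω)^4 + (-2)*(φ X₁)*(φ X₂)^3*(z)^4*(φ ω)^3 + (-6)*(φ X₁)*(φ X₂)^3*(z)^4*(φ ω)^4 + (-4)*(φ X₁)*(φ X₂)^3*(z)^4*(φ ω)^5 + (-2)*(φ X₁)*(φ X₂)^3*(z)^4*(φ ω)^6 + (2)*(φ X₁)*(φ X₂)^3*(z)^4*(φ ω)^7 + (-2)*(φ X₁)*(φ X₂)^3*(φ μ)*(z)*(φ ω)^3 + (-6)*(φ X₁)*(φ X₂)^3*(φ μ)*(z)*(φ ω)^4 + (-4)*(φ X₁)*(φ X₂)^3*(φ μ)*(z)*(φ ω)^5 + (-2)*(φ X₁)*(φ X₂)^3*(φ μ)*(z)*(φ ω)^6 + (2)*(φ X₁)*(φ X₂)^3*(φ μ)*(z)*(φ ω)^7 + (-2)*(φ X₁)^2*(φ X₂)^2*(z)^3*(φ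 ω)^2 + (-9)*(φ X₁)^2*(φ X₂)^2*(z)^3*(φ ω)^4 + (-8)*(φ X₁)^2*(φ X₂)^2*(z)^3*(φ ω)^5 + (1)*(φ X₁)^2*(φ X₂)^2*(z)^3*(φ ω)^8 + (-2)*(φ X₁)^2*(φ X₂)^2*(φ μ)*(φ ω)^2 + (-9)*(φ X₁)^2*(φ X₂)^2*(φ μ)*(φ ω)^4 + (-8)*(φ X₁)^2*(φ X₂)^2*(φ μ)*(φ ω)^5 + (1)*(φ X₁)^2*(φ X₂)^2*(φ μ)*(φ ω)^8 + (-2)*(φ X₁)^3*(φ X₂)*(z)^2*(φ ω)^3 + (-6)*(φ X₁)^3*(φ X₂)*(z)^2*(φ ω)^4 + (-4)*(φ X₁)^3*(φ X₂)*(z)^2*(φ ω)^5 + (-2)*(φ X₁)^3*(φ X₂)*(z)^2*(φ ω)^6 + (2)*(φ X₁)^3*(φ X₂)*(z)^2*(φ ω)^7 + (1)*(φ X₁)^4*(z)*(φ ω)^2 + (-2)*(φ X₁)^4*(z)*(φ ω)^3 + (-1)*(φ X₁)^4*(z)*(φ ω)^4 + (-2)*(φ X₁)^4*(z)*(φ ω)^5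 + (1)*(φ X₁)^4*(z)*(φ ω)^6 + (-12)*(φ X₀)*(φ X₂)^3*(z)^3*(φ ω)^3 + (-12)*(φ X₀)*(φ X₂)^3*(φ μ)*(φ ω)^3 + (-12)*(φ X₀)*(φ X₁)*(φ X₂)^2*(z)^2*(φ ω)^2 + (-12)*(φ X₀)*(φ X₁)*(φ X₂)^2*(z)^2*(φ ω)^3 + (-12)*(φ X₀)*(φ X₁)*(φ X₂)^2*(z)^2*(φ ω)^4 + (-12)*(φ X₀)*(φ X₁)^2*(φ X₂)*(z)*(φ ω)^2 + (-12)*(φ X₀)*(φ X₁)^2*(φ X₂)*(z)*(φ ω)^3 + (-12)*(φ X₀)*(φ X₁)^2*(φ X₂)*(z)*(φ ω)^4 + (-12)*(φ X₀)*(φ X₁)^3*(φ ω)^3 + (-6)*(φ X₀)^2*(φ X₂)^2*(z)*(φ ω) + (-6)*(φ X₀)^2*(φ X₂)^2*(z)*(φ ω)^2 + (-6)*(φ X₀)^2*(φ X₂)^2*(z)*(φ ω)^3 + (-12)*(φ X₀)^2*(φ X₁)*(φ X₂)*(φ ω) + (-18)*(φ X₀)^2*(φ X₁)*(φ X₂)*(φ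 ω)^2 + (-6)*(φ X₀)^2*(φ X₁)*(φ X₂)*(φ ω)^4) * hz3' + ((-4)*(φ X₂)*(φ B)*(z)^2 + (-2)*(φ X₂)^2*(φ A)*(φ μ)*(z)*(φ ω) + (1)*(φ X₂)^4*(φ μ)^2*(z)^2*(φ ω)^2 + (-3)*(φ X₂)^4*(φ μ)^2*(z)^2*(φ ω)^3 + (1)*(φ X₂)^4*(φ μ)^2*(z)^2*(φ ω)^4 + (-4)*(φ X₁)*(φ B)*(z) + (-6)*(φ X₁)*(φ X₂)*(φ A)*(φ μ) + (2)*(φ X₁)*(φ X₂)*(φ A)*(φ μ)*(φ ω) + (-2)*(φ X₁)*(φ X₂)*(φ A)*(φ μ)*(φ ω)^2 + (-2)*(φ X₁)*(φ X₂)^3*(φ μ)^2*(z)*(φ ω)^3 + (-4)*(φ X₁)*(φ X₂)^3*(φ μ)^2*(z)*(φ ω)^4 + (2)*(φ X₁)*(φ X₂)^3*(φ μ)^2*(z)*(φ ω)^5 + (-2)*(φ X₁)^2*(φ A)*(z)^2*(φ ω) + (-9)*(φ X₁)^2*(φ X₂)^2*(φ μ)^2 + (9)*(φ X₁)^2*(φ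 X₂)^2*(φ μ)^2*(φ ω) + (-2)*(φ X₁)^2*(φ X₂)^2*(φ μ)^2*(φ ω)^2 + (-7)*(φ X₁)^2*(φ X₂)^2*(φ μ)^2*(φ ω)^3 + (-1)*(φ X₁)^2*(φ X₂)^2*(φ μ)^2*(φ ω)^5 + (1)*(φ X₁)^2*(φ X₂)^2*(φ μ)^2*(φ ω)^6 + (-2)*(φ X₁)^3*(φ X₂)*(φ μ)*(z)^2*(φ ω)^3 + (-4)*(φ X₁)^3*(φ X₂)*(φ μ)*(z)^2*(φ ω)^4 + (2)*(φ X₁)^3*(φ X₂)*(φ μ)*(z)^2*(φ ω)^5 + (1)*(φ X₁)^4*(φ μ)*(z)*(φ ω)^2 + (-3)*(φ X₁)^4*(φ μ)*(z)*(φ ω)^3 + (1)*(φ X₁)^4*(φ μ)*(z)*(φ ω)^4 + (-4)*(φ X₀)*(φ X₂)*(φ A)*(z)^2 + (12)*(φ X₀)*(φ X₂)^3*(φ μ)^2 + (-12)*(φ X₀)*(φ X₂)^3*(φ μ)^2*(φ ω) + (-4)*(φ X₀)*(φ X₁)*(φ A)*(z) + (-12)*(φ X₀)*(φ X₁)*(φ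 X₂)^2*(φ μ)*(z)^2*(φ ω)^2 + (-12)*(φ X₀)*(φ X₁)^2*(φ X₂)*(φ μ)*(z)*(φ ω)^2 + (12)*(φ X₀)*(φ X₁)^3*(φ μ) + (-12)*(φ X₀)*(φ X₁)^3*(φ μ)*(φ ω) + (-6)*(φ X₀)^2*(φ X₂)^2*(φ μ)*(z)*(φ ω) + (-18)*(φ X₀)^2*(φ X₁)*(φ X₂)*(φ μ) + (6)*(φ X₀)^2*(φ X₁)*(φ X₂)*(φ μ)*(φ ω) + (-6)*(φ X₀)^2*(φ X₁)*(φ X₂)*(φ μ)*(φ ω)^2 + (-6)*(φ X₀)^2*(φ X₁)^2*(z)^2*(φ ω) + (-4)*(φ X₀)^3*(φ X₂)*(z)^2 + (-4)*(φ X₀)^3*(φ X₁)*(z)) * hwR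
end
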